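/- arXiv:2003.11541 — 9 statements merged into one kernel-verified Lean document; each statement's English description precedes it below -/
import Mathlib

section
/- For small categories A, B, C and functors t : A → C, s : A → B, the cocomma category (flow sum) B ↑_A C, obtained by freely adjoining to the disjoint union B ⊔ C a morphism s(a) → t(a) for each object a of A, modulo the relations generated by morphisms of A, fits into a lax commutative square with the inclusions B → B ↑_A C and C → B ↑_A C, and is universal among such lax squares: for any category D with functors f : B → D, g : C → D and a natural transformation f ∘ s ⟹ g ∘ t, there is a unique functor h : B ↑_A C → D commuting with the inclusions and the natural transformations. -/
open CategoryTheory
universe w v u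
variable {A B C : Type u} [SmallCategory A] [SmallCategory B] [SmallCategory C]

/-- A word `b ⟶ s(a) ⟶ t(a) ⟶ c` representing a morphism of the cocomma category. -/
structure CocommaWord (s : A ⥤ B) (t : A ⥤ C) (b : B) (c : C) : Type u where
  pt : A
  l : b ⟶ s.obj pt
  r : t.obj pt ⟶ c

/-- The relation on words generated by morphisms of `A`. -/
inductive CocommaRel (s : A ⥤ B) (t : A ⥤ C) (b : B) (c : C) :
    CocommaWord s t b c → CocommaWord s t b c → Prop
  | mk {a a' : A} (θ : a ⟶ a') (φ : b ⟶ s.obj a) (ψ : t.obj a' ⟶ c) :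
      CocommaRel s t b c ⟨a, φ, t.map θ ≫ ψ⟩ ⟨a', φ ≫ s.map θ, ψ⟩

/-- The cocomma (flow sum) category `B ↑_A C`: objects are `Ob B ⊔ Ob C`. -/
def Cocomma (s : A ⥤ B) (t : A ⥤ C) : Type u := B ⊕ C

variable (s : A ⥤ B) (t : A ⥤ C)

/-- Morphisms of the cocomma category. -/
def CocommaHom : Cocomma s t → Cocomma s t → Type u
  | .inl b, .inl b' => b ⟶ b'
  | .inl b, .inr c => Quot (CocommaRel s t b c)
  | .inr _, .inl _ => PEmpty
  | .inr c, .inr c' => c ⟶ c'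

instance : Category.{u} (Cocomma s t) where
  Hom := CocommaHom s t
  id x := match x with
    | .inl b => (𝟙 b : b ⟶ b)
    | .inr c => (𝟙 c : c ⟶ c)
  comp {x y z} F G := match x, y, z, F, G with
    | .inl _, .inl _, .inl _, F, G => (F ≫ G : _ ⟶ _)
    | .inl _b, .inl _b', .inr _c, F, G =>
        Quot.lift (fun w => Quot.mk _ ⟨w.pt, F ≫ w.l, w.r⟩)
          (by rintro _ _ ⟨θ, φ, ψ⟩; dsimp
              erw [← Category.assoc]
              exact Quot.sound (CocommaRel.mk θ (F ≫ φ) ψ)) G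
    | .inl _b, .inr _c, .inr _c', F, G =>
        Quot.lift (fun w => Quot.mk _ ⟨w.pt, w.l, w.r ≫ G⟩)
          (by rintro _ _ ⟨θ, φ, ψ⟩; dsimp
              erw [Category.assoc]
              exact Quot.sound (CocommaRel.mk θ φ (ψ ≫ G))) F
    | .inr _, .inr _, .inr _, F, G => (F ≫ G : _ ⟶ _)
    | .inr _, .inl _, _, F, _ => F.elim
    | .inl _, .inr _, .inl _, _, G => G.elim
    | .inr _, .inr _, .inl _, _, G => G.elim
  id_comp {x y} F := by
    match x, y, F with
    | .inl _, .inl _, F => exact Category.id_comp F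
    | .inl _, .inr _, F =>
        induction F using Quot.ind with
        | _ w => dsimp; rw [Category.id_comp]
    | .inr _, .inl _, F => exact F.elim
    | .inr _, .inr _, F => exact Category.id_comp F
  comp_id {x y} F := by
    match x, y, F with
    | .inl _, .inl _, F => exact Category.comp_id F
    | .inl _, .inr _, F =>
        induction F using Quot.ind with
        | _ w => dsimp; rw [Category.comp_id]
    | .inr _, .inl _, F => exact F.elim
    | .inr _, .inr _, F => exact Category.comp_id F
  assoc {x y z w} F G H := by
    match x, y, z, w, F, G, H with
    | .inl _, .inl _, .inl _, .inl _, F, G, H => exact Category.assoc F G H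
    | .inl _, .inl _, .inl _, .inr _, F, G, H =>
        induction H using Quot.ind with
        | _ w => dsimp; erw [Category.assoc]
    | .inl _, .inl _, .inr _, .inr _, F, G, H =>
        induction G using Quot.ind with
        | _ w => dsimp
    | .inl _, .inr _, .inr _, .inr _, F, G, H =>
        induction F using Quot.ind with
        | _ w => dsimp; erw [Category.assoc]
    | .inr _, .inr _, .inr _, .inr _, F, G, H => exact Category.assoc F G H
    | .inr _, .inl _, _, _, F, _, _ => exact F.elim
    | .inl _, .inr _, .inl _, _, _, G, _ => exact G.elim
    | .inr _, .inr _, .inl _, _, _, G, _ => exact G.elim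
    | _, .inl _, .inr _, .inl _, _, _, H => exact H.elim
    | _, .inr _, .inr _, .inl _, _, _, H => exact H.elim

/-- The inclusion of `B` into the cocomma category. -/
def Cocomma.inlF : B ⥤ Cocomma s t where
  obj b := Sum.inl b
  map φ := φ
  map_id _ := rfl
  map_comp _ _ := rfl

/-- The inclusion of `C` into the cocomma category. -/
def Cocomma.inrF : C ⥤ Cocomma s t where
  obj c := Sum.inr c
  map φ := φ
  map_id _ := rfl
  map_comp _ _ := rfl

/-- The canonical natural transformation of the cocomma (lax) square. -/
def Cocomma.natTrans : s ⋙ Cocomma.inlF s t ⟶ t ⋙ Cocomma.inrF s t where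
  app a := Quot.mk _ ⟨a, 𝟙 _, 𝟙 _⟩
  naturality a a' θ := by
    dsimp [Cocomma.inlF, Cocomma.inrF]
    show Quot.mk _ _ = Quot.mk _ _
    have := Quot.sound (CocommaRel.mk (s := s) (t := t) θ (𝟙 (s.obj a)) (𝟙 (t.obj a')))
    simpa using this.symm

/-- The functor out of the cocomma category determined by `f`, `g`, `η`. -/
def Cocomma.desc {D : Type v} [Category.{w} D] (f : B ⥤ D) (g : C ⥤ D)
    (η : s ⋙ f ⟶ t ⋙ g) : Cocomma s t ⥤ D where
  obj x := match x with
    | .inl b => f.obj b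
    | .inr c => g.obj c
  map {x y} F := match x, y, F with
    | .inl _, .inl _, F => f.map F
    | .inl _, .inr _, F =>
        Quot.lift (fun w => f.map w.l ≫ η.app w.pt ≫ g.map w.r)
          (by rintro _ _ ⟨θ, φ, ψ⟩
              dsimp
              have := η.naturality θ
              simp only [Functor.comp_map] at this
              simp [reassoc_of% this]) F
    | .inr _, .inr _, F => g.map F
    | .inr _, .inl _, F => F.elim
  map_id x := by
    match x with
    | .inl b => exact f.map_id b
    | .inr c => exact g.map_id c
  map_comp {x y z} F G := by
    match x, y, z, F, G with
    | .inl _, .inl _, .inl _, F, G => exact f.map_comp F G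
    | .inl _, .inl _, .inr _, F, G =>
        induction G using Quot.ind with
        | _ w =>
          obtain ⟨a, l, r⟩ := w
          show f.map (F ≫ l) ≫ η.app a ≫ g.map r = _
          simp
          erw [f.map_comp]
          exact Category.assoc _ _ _
    | .inl _, .inr _, .inr _, F, G =>
        induction F using Quot.ind with
        | _ w =>
          obtain ⟨a, l, r⟩ := w
          show f.map l ≫ η.app a ≫ g.map (r ≫ G) = _
          simp
          erw [g.map_comp]
    | .inr _, .inr _, .inr _, F, G => exact g.map_comp F G
    | .inr _, .inl _, _, F, _ => exact F.elim
    | .inl _, .inr _, .inl _, _, G => exact G.elim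
    | .inr _, .inr _, .inl _, _, G => exact G.elim

/-- **Universal property of the cocomma (flow sum) category.**
For any category `D`, functors `f : B ⥤ D`, `g : C ⥤ D` and a natural transformation
`f ∘ s ⟶ g ∘ t`, there is a unique functor `h : B ↑_A C ⥤ D` commuting with the
inclusions and the natural transformations. -/
theorem cocomma_universal_property
    {A B C : Type u} [SmallCategory A] [SmallCategory B] [SmallCategory C]
    (s : A ⥤ B) (t : A ⥤ C) {D : Type v} [Category.{w} D]
    (f : B ⥤ D) (g : C ⥤ D) (η : s ⋙ f ⟶ t ⋙ g) :
    ∃! h : Cocomma s t ⥤ D,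
      ∃ (h₁ : Cocomma.inlF s t ⋙ h = f) (h₂ : Cocomma.inrF s t ⋙ h = g),
        ∀ a : A, h.map ((Cocomma.natTrans s t).app a) =
          eqToHom (Functor.congr_obj h₁ (s.obj a)) ≫ η.app a ≫
            eqToHom (Functor.congr_obj h₂ (t.obj a)).symm := by
  refine ⟨Cocomma.desc s t f g η, ⟨rfl, rfl, ?_⟩, ?_⟩
  · intro a
    show f.map (𝟙 _) ≫ η.app a ≫ g.map (𝟙 _) = _
    simp
    erw [eqToHom_refl, eqToHom_refl, Category.id_comp, Category.comp_id]
  · rintro h' ⟨h₁, h₂, hη⟩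
    have hobj : ∀ x : Cocomma s t, h'.obj x = (Cocomma.desc s t f g η).obj x := by
      rintro (b | c)
      · exact Functor.congr_obj h₁ b
      · exact Functor.congr_obj h₂ c
    refine CategoryTheory.Functor.ext hobj ?_
    rintro (b | c) (b' | c') F
    · exact Functor.congr_hom h₁ (F : b ⟶ b')
    · induction F using Quot.ind with
      | _ w =>
        obtain ⟨a, l, r⟩ := w
        have hF : (Quot.mk _ ⟨a, l, r⟩ :
            (Cocomma.inlF s t).obj b ⟶ (Cocomma.inrF s t).obj c') =
            (Cocomma.inlF s t).map l ≫ (Cocomma.natTrans s t).app a ≫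
              (Cocomma.inrF s t).map r := by
          show Quot.mk _ _ = Quot.mk _ _
          congr 1
          dsimp [Cocomma.inlF, Cocomma.inrF, Cocomma.natTrans]
          aesop_cat
        have hdesc : (Cocomma.desc s t f g η).map
            (Quot.mk _ ⟨a, l, r⟩ :
              (Cocomma.inlF s t).obj b ⟶ (Cocomma.inrF s t).obj c') =
            (f.map l ≫ η.app a ≫ g.map r :
              (Cocomma.desc s t f g η).obj ((Cocomma.inlF s t).obj b) ⟶
                (Cocomma.desc s t f g η).obj ((Cocomma.inrF s t).obj c')) := rfl
        erw [hdesc]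
        conv_lhs => rw [hF]
        erw [h'.map_comp, h'.map_comp, hη a]
        have hl := Functor.congr_hom h₁ l
        have hr := Functor.congr_hom h₂ r
        rw [Functor.comp_map] at hl hr
        erw [hl, hr]
        simp
        erw [Category.assoc, Category.assoc, Category.assoc, Category.assoc, Category.assoc, Category.assoc]
        erw [eqToHom_trans_assoc, eqToHom_trans_assoc, eqToHom_refl, Category.id_comp, eqToHom_refl, Category.id_comp]
        rfl
    · exact F.elim
    · exact Functor.congr_hom h₂ (F : c ⟶ c')
end

section
/- In a horizontally composed diagram of two adjacent commutative squares of small categories, if the right square is a comma square (flow product square) for the cospan f : B → D ← C : g, then the outer rectangle is a comma square for the cospan (B → D ← F) if and only if the left square is a fibre product square; in particular (f ↓ g) ×_C F ≅ f ↓ (g ∘ r) for any functor r : F → C. -/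
open CategoryTheory
universe u
variable {B C D F : Type u} [SmallCategory B] [SmallCategory C] [SmallCategory D] [SmallCategory F]

/-- The (strict) fibre product of two functors with common target. -/
structure CatPullback {X Y Z : Type u} [SmallCategory X] [SmallCategory Y] [SmallCategory Z]
    (p : X ⥤ Z) (q : Y ⥤ Z) : Type u where
  left : X
  right : Y
  eq : p.obj left = q.obj right

instance {X Y Z : Type u} [SmallCategory X] [SmallCategory Y] [SmallCategory Z]
    (p : X ⥤ Z) (q : Y ⥤ Z) : Category.{u} (CatPullback p q) where
  Hom x y := {φ : (x.left ⟶ y.left) × (x.right ⟶ y.right) //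
    p.map φ.1 = eqToHom x.eq ≫ q.map φ.2 ≫ eqToHom y.eq.symm}
  id x := ⟨(𝟙 _, 𝟙 _), by simp⟩
  comp φ ψ := ⟨(φ.1.1 ≫ ψ.1.1, φ.1.2 ≫ ψ.1.2), by simp [φ.2, ψ.2]⟩
  id_comp φ := by apply Subtype.ext; simp
  comp_id φ := by apply Subtype.ext; simp
  assoc φ ψ χ := by apply Subtype.ext; simp

/-- A functor is an isomorphism of categories if it admits a strict inverse. -/
def IsCatIso {X Y : Type u} [SmallCategory X] [SmallCategory Y] (e : X ⥤ Y) : Prop :=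
  ∃ e' : Y ⥤ X, e ⋙ e' = 𝟭 X ∧ e' ⋙ e = 𝟭 Y

variable (f : B ⥤ D) (g : C ⥤ D) (r : F ⥤ C)

section
variable {P : Type u} [SmallCategory P] (u : P ⥤ Comma f g) (w : P ⥤ F)
  (comm : u ⋙ Comma.snd f g = w ⋙ r)

/-- The comparison functor from the top-left corner of a left square over the comma square
to the strict fibre product `(f ↓ g) ×_C F`. -/
def toPullback : P ⥤ CatPullback (Comma.snd f g) r where
  obj p := ⟨u.obj p, w.obj p, Functor.congr_obj comm p⟩
  map φ := ⟨(u.map φ, w.map φ), by simpa using Functor.congr_hom comm φ⟩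
  map_id p := by apply Subtype.ext; dsimp; rw [u.map_id, w.map_id]; rfl
  map_comp φ ψ := by apply Subtype.ext; dsimp; rw [u.map_comp, w.map_comp]; rfl

/-- The comparison functor from the top-left corner to the comma category `f ↓ (g ∘ r)`
of the outer rectangle. -/
def toOuterComma : P ⥤ Comma f (r ⋙ g) where
  obj p := ⟨(u.obj p).left, w.obj p,
    (u.obj p).hom ≫ g.map (eqToHom (Functor.congr_obj comm p))⟩
  map {p q} φ := ⟨(u.map φ).left, w.map φ, by
    have h1 := (u.map φ).w
    have h2 := Functor.congr_hom comm φ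
    dsimp at h1 h2 ⊢
    rw [← Category.assoc, h1, Category.assoc, Category.assoc, ← Functor.map_comp,
      ← Functor.map_comp]
    congr 1
    have h2' : (u.map φ).right = _ := h2
    rw [h2']
    simp⟩
  map_id p := by apply CommaMorphism.ext <;> simp
  map_comp φ ψ := by apply CommaMorphism.ext <;> simp

end

section Aux

@[simp]
theorem CatPullback.eqToHom_fst {X Y Z : Type u} [SmallCategory X] [SmallCategory Y]
    [SmallCategory Z] {p : X ⥤ Z} {q : Y ⥤ Z} {x y : CatPullback p q} (h : x = y) :
    (eqToHom h).1.1 = eqToHom (by rw [h]) := by subst h; rfl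

@[simp]
theorem CatPullback.eqToHom_snd {X Y Z : Type u} [SmallCategory X] [SmallCategory Y]
    [SmallCategory Z] {p : X ⥤ Z} {q : Y ⥤ Z} {x y : CatPullback p q} (h : x = y) :
    (eqToHom h).1.2 = eqToHom (by rw [h]) := by subst h; rfl

@[simp]
theorem CatPullback.comp_fst {X Y Z : Type u} [SmallCategory X] [SmallCategory Y]
    [SmallCategory Z] {p : X ⥤ Z} {q : Y ⥤ Z} {x y z : CatPullback p q}
    (φ : x ⟶ y) (ψ : y ⟶ z) : (φ ≫ ψ).val.1 = φ.val.1 ≫ ψ.val.1 := rfl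

@[simp]
theorem CatPullback.comp_snd {X Y Z : Type u} [SmallCategory X] [SmallCategory Y]
    [SmallCategory Z] {p : X ⥤ Z} {q : Y ⥤ Z} {x y z : CatPullback p q}
    (φ : x ⟶ y) (ψ : y ⟶ z) : (φ ≫ ψ).val.2 = φ.val.2 ≫ ψ.val.2 := rfl

theorem IsCatIso.comp {X Y Z : Type u} [SmallCategory X] [SmallCategory Y] [SmallCategory Z]
    {a : X ⥤ Y} {b : Y ⥤ Z} (ha : IsCatIso a) (hb : IsCatIso b) : IsCatIso (a ⋙ b) := by
  obtain ⟨a', ha1, ha2⟩ := ha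
  obtain ⟨b', hb1, hb2⟩ := hb
  refine ⟨b' ⋙ a', ?_, ?_⟩
  · show a ⋙ (b ⋙ b') ⋙ a' = 𝟭 X
    rw [hb1, Functor.id_comp, ha1]
  · show b' ⋙ (a' ⋙ a) ⋙ b = 𝟭 Z
    rw [ha2, Functor.id_comp, hb2]

/-- The comparison iso from `(f ↓ g) ×_C F` to `f ↓ (g ∘ r)`. -/
def middleIso : CatPullback (Comma.snd f g) r ⥤ Comma f (r ⋙ g) where
  obj x := ⟨x.left.left, x.right, x.left.hom ≫ g.map (eqToHom x.eq)⟩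
  map {x y} φ := ⟨φ.1.1.left, φ.1.2, by
    have h1 := φ.1.1.w
    have h2 : φ.1.1.right = _ := φ.2
    dsimp at h1 h2 ⊢
    rw [← Category.assoc, h1, Category.assoc, ← Functor.map_comp]
    simp [h2]⟩
  map_id x := by apply CommaMorphism.ext <;> rfl
  map_comp φ ψ := by apply CommaMorphism.ext <;> rfl

/-- The inverse of `middleIso`. -/
def middleIsoInv : Comma f (r ⋙ g) ⥤ CatPullback (Comma.snd f g) r where
  obj y := ⟨⟨y.left, r.obj y.right, y.hom⟩, y.right, rfl⟩
  map {x y} ψ := ⟨(⟨ψ.left, r.map ψ.right, ψ.w⟩, ψ.right), by simp⟩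
  map_id x := by apply Subtype.ext; dsimp; congr 1 <;> apply CommaMorphism.ext <;> simp
  map_comp φ ψ := by apply Subtype.ext; dsimp; congr 1 <;> apply CommaMorphism.ext <;> simp

theorem middleIso_isCatIso : IsCatIso (middleIso f g r) := by
  refine ⟨middleIsoInv f g r, ?_, ?_⟩
  · apply CategoryTheory.Functor.ext
    · intro x y φ
      have h2 : φ.1.1.right = _ := φ.2
      apply Subtype.ext
      refine Prod.ext ?_ ?_
      · apply CommaMorphism.ext
        · simp only [CatPullback.comp_fst, CatPullback.eqToHom_fst, Comma.comp_left, Comma.eqToHom_left]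
          simp [middleIso, middleIsoInv]
          exact (Category.id_comp _).symm
        · simp only [CatPullback.comp_fst, CatPullback.eqToHom_fst, Comma.comp_right, Comma.eqToHom_right]
          simp [middleIso, middleIsoInv, h2]
          erw [eqToHom_trans_assoc, eqToHom_trans]
          exact (Category.comp_id _).symm.trans (Category.id_comp _).symm
      · simp only [CatPullback.comp_snd, CatPullback.eqToHom_snd]
        simp [middleIso, middleIsoInv]
        exact (Category.id_comp _).symm
    · rintro ⟨⟨b, c, h⟩, fc, eq⟩
      change c = r.obj fc at eq
      subst eq
      dsimp [middleIso, middleIsoInv]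
      congr 1
      simp
  · apply CategoryTheory.Functor.ext
    · intro x y φ
      apply CommaMorphism.ext <;> simp only [Comma.comp_left, Comma.comp_right, Comma.eqToHom_left, Comma.eqToHom_right] <;> simp [middleIso, middleIsoInv] <;> exact (Category.id_comp _).symm
    · rintro ⟨b, fc, h⟩
      dsimp [middleIso, middleIsoInv]
      congr 1
      simp

theorem IsCatIso.of_comp_right {X Y Z : Type u} [SmallCategory X] [SmallCategory Y]
    [SmallCategory Z] {t : X ⥤ Y} {e : Y ⥤ Z} (he : IsCatIso e) :
    IsCatIso (t ⋙ e) ↔ IsCatIso t := by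
  obtain ⟨e', he1, he2⟩ := he
  constructor
  · intro h
    have : t = (t ⋙ e) ⋙ e' := by
      show t = t ⋙ e ⋙ e'
      rw [he1, Functor.comp_id]
    rw [this]
    exact h.comp ⟨e, he2, he1⟩
  · intro h
    exact h.comp ⟨e', he1, he2⟩

end Aux

/-- **Composition of comma squares with fibre products.** Given a commutative left square
attached to the comma square of `f : B ⥤ D ← C : g`, the outer rectangle is a comma square
for the cospan `B → D ← F` if and only if the left square is a fibre product square;
in particular `(f ↓ g) ×_C F ≅ f ↓ (g ∘ r)`. -/
theorem comma_pullback_pasting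
    {P : Type u} [SmallCategory P] (u : P ⥤ Comma f g) (w : P ⥤ F)
    (comm : u ⋙ Comma.snd f g = w ⋙ r) :
    (IsCatIso (toOuterComma f g r u w comm) ↔ IsCatIso (toPullback f g r u w comm)) ∧
      ∃ e : CatPullback (Comma.snd f g) r ⥤ Comma f (r ⋙ g), IsCatIso e := by
  have key : toOuterComma f g r u w comm = toPullback f g r u w comm ⋙ middleIso f g r := by
    apply CategoryTheory.Functor.ext
    · intro x y φ
      apply CommaMorphism.ext <;> simp only [Comma.comp_left, Comma.comp_right, Comma.eqToHom_left, Comma.eqToHom_right] <;> simp [toOuterComma, toPullback, middleIso] <;> exact (Category.id_comp _).symm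
    · intro p
      rfl
  constructor
  · rw [key]
    exact IsCatIso.of_comp_right (middleIso_isCatIso f g r)
  · exact ⟨middleIso f g r, middleIso_isCatIso f g r⟩
end

section
/- Let f : B → D be a Grothendieck opfibration between small categories and d an object of D. Then the inclusion of the fibre f⁻¹(d) into the comma category f ↓ d (the flow of f to d) is a cofinal (final) functor. -/
open CategoryTheory
universe v w u
section Opfib
variable {B D : Type u} [SmallCategory B] [SmallCategory D]

/-- An arrow `φ` of `B` is cocartesian for `f : B ⥤ D` if any other arrow out of its source
whose image factors through `f(φ)` factors uniquely through `φ`, with prescribed image. -/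
def IsCocartesianArrow (f : B ⥤ D) {x y : B} (φ : x ⟶ y) : Prop :=
  ∀ ⦃z : B⦄ (φ' : x ⟶ z) (ψ : f.obj y ⟶ f.obj z), f.map φ' = f.map φ ≫ ψ →
    ∃! χ : y ⟶ z, f.map χ = ψ ∧ φ ≫ χ = φ'

/-- A functor is a Grothendieck opfibration if every arrow of the base with a given lift of
its source admits a cocartesian lift. -/
def IsOpfibration (f : B ⥤ D) : Prop :=
  ∀ ⦃x : B⦄ ⦃d : D⦄ (ψ : f.obj x ⟶ d), ∃ (y : B) (φ : x ⟶ y) (e : f.obj y = d),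
    f.map φ ≫ eqToHom e = ψ ∧ IsCocartesianArrow f φ

/-- The fibre of `f : B ⥤ D` at `d`: objects of `B` over `d` and morphisms over `𝟙 d`. -/
structure Fiber (f : B ⥤ D) (d : D) : Type u where
  obj : B
  eq : f.obj obj = d

instance (f : B ⥤ D) (d : D) : Category.{u} (Fiber f d) where
  Hom x y := {φ : x.obj ⟶ y.obj // f.map φ = eqToHom (x.eq.trans y.eq.symm)}
  id x := ⟨𝟙 _, by simp⟩
  comp φ ψ := ⟨φ.1 ≫ ψ.1, by simp [φ.2, ψ.2]⟩
  id_comp φ := by apply Subtype.ext; simp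
  comp_id φ := by apply Subtype.ext; simp
  assoc φ ψ χ := by apply Subtype.ext; simp

/-- The inclusion of the fibre `f⁻¹(d)` into the comma category `f ↓ d`. -/
def fiberInclusion (f : B ⥤ D) (d : D) : Fiber f d ⥤ CostructuredArrow f d where
  obj x := CostructuredArrow.mk (eqToHom x.eq)
  map φ := CostructuredArrow.homMk φ.1 (by simp [φ.2])

end Opfib

/-- **For an opfibration `f : B ⥤ D`, the inclusion of the fibre `f⁻¹(d)` into the
comma category `f ↓ d` is cofinal (final).** -/
theorem fiberInclusion_final {B D : Type u} [SmallCategory B] [SmallCategory D]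
    (f : B ⥤ D) (hf : IsOpfibration f) (d : D) :
    (fiberInclusion f d).Final := by
  constructor
  intro X
  obtain ⟨y, φ, e, hφ, hc⟩ := hf X.hom
  -- the cocartesian lift gives an object of the structured arrow category
  let y0 : Fiber f d := ⟨y, e⟩
  let s : StructuredArrow X (fiberInclusion f d) :=
    StructuredArrow.mk (Y := y0) (CostructuredArrow.homMk φ (by exact hφ))
  -- every object receives a morphism from `s`
  have key : ∀ Y : StructuredArrow X (fiberInclusion f d), Nonempty (s ⟶ Y) := by
    intro Y
    have hw : f.map Y.hom.left ≫ eqToHom Y.right.eq = X.hom := by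
      simpa [fiberInclusion] using CostructuredArrow.w Y.hom
    have hfac : f.map Y.hom.left = f.map φ ≫ eqToHom (e.trans Y.right.eq.symm) := by
      rw [← hφ] at hw
      calc (f.map Y.hom.left : f.obj X.left ⟶ f.obj Y.right.obj)
          = (f.map Y.hom.left ≫ eqToHom Y.right.eq) ≫ eqToHom Y.right.eq.symm := by
            exact (by simp : ∀ g : f.obj X.left ⟶ f.obj Y.right.obj,
              g = (g ≫ eqToHom Y.right.eq) ≫ eqToHom Y.right.eq.symm) _
        _ = (f.map φ ≫ eqToHom e) ≫ eqToHom Y.right.eq.symm := by rw [hw]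
        _ = f.map φ ≫ eqToHom (e.trans Y.right.eq.symm) := by simp
    obtain ⟨χ, ⟨hχ1, hχ2⟩, -⟩ := hc Y.hom.left (eqToHom (e.trans Y.right.eq.symm)) hfac
    refine ⟨StructuredArrow.homMk (⟨χ, hχ1⟩ : y0 ⟶ Y.right) ?_⟩
    apply CostructuredArrow.hom_ext
    exact hχ2
  have : Nonempty (StructuredArrow X (fiberInclusion f d)) := ⟨s⟩
  apply zigzag_isConnected
  intro Y₁ Y₂
  obtain ⟨m₁⟩ := key Y₁
  obtain ⟨m₂⟩ := key Y₂
  exact Relation.ReflTransGen.tail (Relation.ReflTransGen.single (Or.inr ⟨m₁⟩))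
    (Or.inl ⟨m₂⟩)
end

section
/- Let f : B → D and g : C → D be functors between small categories and V a bicomplete category. For the comma square with projections s : f ↓ g → B and t : f ↓ g → C and its canonical natural transformation f ∘ s ⟹ g ∘ t, the base change natural transformation t_! s^* ⟹ g^* f_! is a natural isomorphism of functors Fun(B, V) → Fun(C, V). -/
open CategoryTheory CategoryTheory.Limits
universe v w u

section BaseChange
variable {A B C D : Type u} [SmallCategory A] [SmallCategory B] [SmallCategory C] [SmallCategory D]
variable (V : Type v) [Category.{w} V] [HasColimitsOfSize.{u,u} V]

/-- The transformation `f^* ⋙ s^* ⟶ g^* ⋙ t^*` induced by `α : s ⋙ f ⟶ t ⋙ g`. -/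
def restrictionSquare (s : A ⥤ B) (t : A ⥤ C) (f : B ⥤ D) (g : C ⥤ D) (α : s ⋙ f ⟶ t ⋙ g) :
    ((Functor.whiskeringLeft B D V).obj f ⋙ (Functor.whiskeringLeft A B V).obj s : (D ⥤ V) ⥤ (A ⥤ V)) ⟶
      (Functor.whiskeringLeft C D V).obj g ⋙ (Functor.whiskeringLeft A C V).obj t where
  app H := Functor.whiskerRight α H
  naturality := by intros; ext; simp

/-- The base change natural transformation `t_! s^* ⟶ g^* f_!` of a lax square,
defined as the composite `t_! s^* ⟶ t_! s^* f^* f_! ⟶ t_! t^* g^* f_! ⟶ g^* f_!`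
using the unit of `f_! ⊣ f^*` and the counit of `t_! ⊣ t^*`. -/
noncomputable def baseChange (s : A ⥤ B) (t : A ⥤ C) (f : B ⥤ D) (g : C ⥤ D)
    (α : s ⋙ f ⟶ t ⋙ g) :
    ((Functor.whiskeringLeft A B V).obj s ⋙ t.lan : (B ⥤ V) ⥤ (C ⥤ V)) ⟶
      f.lan ⋙ (Functor.whiskeringLeft C D V).obj g :=
  Functor.whiskerRight (f.lanAdjunction V).unit ((Functor.whiskeringLeft A B V).obj s ⋙ t.lan) ≫
    Functor.whiskerRight (Functor.whiskerLeft f.lan (restrictionSquare V s t f g α)) t.lan ≫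
    Functor.whiskerLeft (f.lan ⋙ (Functor.whiskeringLeft C D V).obj g) (t.lanAdjunction V).counit

lemma baseChange_app (s : A ⥤ B) (t : A ⥤ C) (f : B ⥤ D) (g : C ⥤ D)
    (α : s ⋙ f ⟶ t ⋙ g) (H : B ⥤ V) :
    (baseChange V s t f g α).app H =
      t.lan.map (Functor.whiskerLeft s ((f.lanAdjunction V).unit.app H)) ≫
      t.lan.map (Functor.whiskerRight α (f.lan.obj H)) ≫
      (t.lanAdjunction V).counit.app (g ⋙ f.lan.obj H) := by
  rfl

lemma baseChange_key (s : A ⥤ B) (t : A ⥤ C) (f : B ⥤ D) (g : C ⥤ D)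
    (α : s ⋙ f ⟶ t ⋙ g) (H : B ⥤ V) :
    t.lanUnit.app (s ⋙ H) ≫ Functor.whiskerLeft t ((baseChange V s t f g α).app H) =
      Functor.whiskerLeft s (f.lanUnit.app H) ≫ Functor.whiskerRight α (f.lan.obj H) := by
  rw [baseChange_app]
  rw [Functor.lanAdjunction_unit]
  rw [Functor.whiskerLeft_comp, Functor.whiskerLeft_comp]
  have h1 : ∀ {F₁ F₂ : A ⥤ V} (φ : F₁ ⟶ F₂),
      t.lanUnit.app F₁ ≫ Functor.whiskerLeft t (t.lan.map φ) = φ ≫ t.lanUnit.app F₂ := by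
    intro F₁ F₂ φ
    exact (t.lanUnit.naturality φ).symm
  rw [← Category.assoc, h1, Category.assoc, ← Category.assoc (t.lanUnit.app _), h1]
  have h2 : t.lanUnit.app ((t ⋙ g) ⋙ f.lan.obj H) ≫
      Functor.whiskerLeft t ((t.lanAdjunction V).counit.app (g ⋙ f.lan.obj H)) =
      𝟙 ((t ⋙ g) ⋙ f.lan.obj H) :=
    t.lanUnit_app_whiskerLeft_lanAdjunction_counit_app (g ⋙ f.lan.obj H)
  simp only [Category.assoc]
  rw [h2]
  simp

end BaseChange

namespace BCAux
variable {B C D : Type u} [SmallCategory B] [SmallCategory C] [SmallCategory D]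
  (f : B ⥤ D) (g : C ⥤ D) (c : C)

/-- Comparison functor between costructured arrow categories. -/
@[simps]
def commaG : CostructuredArrow (Comma.snd f g) c ⥤ CostructuredArrow f (g.obj c) where
  obj e := CostructuredArrow.mk (e.left.hom ≫ g.map e.hom)
  map {e₁ e₂} m := CostructuredArrow.homMk m.left.left (by
    have h1 := m.left.w
    have h2 := m.w
    dsimp at h1 h2 ⊢
    simp at h2
    rw [reassoc_of% h1, ← g.map_comp]
    exact congrArg (fun x => e₁.left.hom ≫ g.map x) h2)

def e0 (d : CostructuredArrow f (g.obj c)) : CostructuredArrow (Comma.snd f g) c :=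
  CostructuredArrow.mk (Y := Comma.mk (L := f) (R := g) d.left c d.hom) (𝟙 c)

def base (d : CostructuredArrow f (g.obj c)) : StructuredArrow d (commaG f g c) :=
  StructuredArrow.mk (Y := e0 f g c d) (CostructuredArrow.homMk (𝟙 d.left) (by simp [e0, commaG]))

def e1 (e : CostructuredArrow (Comma.snd f g) c) : CostructuredArrow (Comma.snd f g) c :=
  CostructuredArrow.mk (Y := Comma.mk (L := f) (R := g) e.left.left c (e.left.hom ≫ g.map e.hom))
    (𝟙 c)

def toE1 (e : CostructuredArrow (Comma.snd f g) c) : e ⟶ e1 f g c e :=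
  CostructuredArrow.homMk ⟨𝟙 e.left.left, e.hom, by simp [e1]⟩ (by simp [e1]; exact Category.comp_id _)

instance commaG_final : (commaG f g c).Final := by
  constructor
  intro d
  have : Nonempty (StructuredArrow d (commaG f g c)) := ⟨base f g c d⟩
  apply zigzag_isConnected
  intro j₁ j₂
  suffices h : ∀ j : StructuredArrow d (commaG f g c), Zigzag j (base f g c d) by
    exact (h j₁).trans ((h j₂).symm)
  intro j
  letI j' : StructuredArrow d (commaG f g c) :=
    StructuredArrow.mk (j.hom ≫ (commaG f g c).map (toE1 f g c j.right))
  have z1 : Zag j j' := Or.inl ⟨StructuredArrow.homMk (toE1 f g c j.right) rfl⟩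
  have z2 : Nonempty (base f g c d ⟶ j') := by
    have hw := j.hom.w
    dsimp at hw
    simp at hw
    refine ⟨StructuredArrow.homMk (CostructuredArrow.homMk
      ⟨j.hom.left, 𝟙 c, ?_⟩ (by simp only [j']; simp [base, e0, e1]; exact Category.comp_id _)) ?_⟩
    · simp only [j']
      simp [base, e0, e1, toE1, hw]
      exact j.hom.w.trans (Category.comp_id _)
    · ext
      simp only [j']
      simp [base, e0, e1, toE1]
      exact (Category.id_comp _).trans (Category.comp_id _).symm
  exact Relation.ReflTransGen.tail (Relation.ReflTransGen.single z1) (Or.inr z2)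


section Main
variable {B C D : Type u} [SmallCategory B] [SmallCategory C] [SmallCategory D]
  (f : B ⥤ D) (g : C ⥤ D) (c : C)
variable (V : Type v) [Category.{w} V] [HasColimitsOfSize.{u,u} V] (H : B ⥤ V)

example : commaG f g c ⋙ (CostructuredArrow.proj f (g.obj c) ⋙ H) =
    CostructuredArrow.proj (Comma.snd f g) c ⋙ (Comma.fst f g ⋙ H) := rfl

end Main
end BCAux

/-- **Base change along a comma (flow product) square is an isomorphism:**
for the comma square with projections `s : f ↓ g ⥤ B`, `t : f ↓ g ⥤ C`, the base change
transformation `t_! s^* ⟶ g^* f_!` is a natural isomorphism. -/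
theorem baseChange_comma_isIso {B C D : Type u} [SmallCategory B] [SmallCategory C]
    [SmallCategory D] (f : B ⥤ D) (g : C ⥤ D)
    (V : Type v) [Category.{w} V] [HasColimitsOfSize.{u,u} V] [HasLimitsOfSize.{u,u} V] :
    IsIso (baseChange V (Comma.fst f g) (Comma.snd f g) f g (Comma.natTrans f g)) := by
  have key : ∀ (H : B ⥤ V) (c : C),
      IsIso (((baseChange V (Comma.fst f g) (Comma.snd f g) f g
        (Comma.natTrans f g)).app H).app c) := by
    intro H c
    set s := Comma.fst f g with hs
    set t := Comma.snd f g with ht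
    set α := Comma.natTrans f g with hα
    set Ξ := (baseChange V s t f g α).app H with hΞ
    let i₁ : (t.lan.obj (s ⋙ H)).obj c ≅ colimit (CostructuredArrow.proj t c ⋙ (s ⋙ H)) :=
      t.leftKanExtensionObjIsoColimit (s ⋙ H) c
    let i₂ : (f.lan.obj H).obj (g.obj c) ≅
        colimit (CostructuredArrow.proj f (g.obj c) ⋙ H) :=
      f.leftKanExtensionObjIsoColimit H (g.obj c)
    have main : i₁.inv ≫ Ξ.app c ≫ i₂.hom =
        colimit.pre (CostructuredArrow.proj f (g.obj c) ⋙ H) (BCAux.commaG f g c) := by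
      apply colimit.hom_ext
      intro e
      have hpre : colimit.ι (CostructuredArrow.proj t c ⋙ (s ⋙ H)) e ≫
          colimit.pre (CostructuredArrow.proj f (g.obj c) ⋙ H) (BCAux.commaG f g c) =
          colimit.ι (CostructuredArrow.proj f (g.obj c) ⋙ H) ((BCAux.commaG f g c).obj e) :=
        colimit.ι_pre (CostructuredArrow.proj f (g.obj c) ⋙ H) (BCAux.commaG f g c) e
      rw [hpre]
      have n1 : colimit.ι (CostructuredArrow.proj t c ⋙ (s ⋙ H)) e ≫ i₁.inv =
          (t.lanUnit.app (s ⋙ H)).app e.left ≫ (t.lan.obj (s ⋙ H)).map e.hom :=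
        t.ι_leftKanExtensionObjIsoColimit_inv (s ⋙ H) c e
      have n2 : (t.lan.obj (s ⋙ H)).map e.hom ≫ Ξ.app c =
          Ξ.app (t.obj e.left) ≫ (f.lan.obj H).map (g.map e.hom) := Ξ.naturality e.hom
      have n3 : (t.lanUnit.app (s ⋙ H)).app e.left ≫ Ξ.app (t.obj e.left) =
          (f.lanUnit.app H).app (s.obj e.left) ≫ (f.lan.obj H).map (α.app e.left) := by
        rw [hΞ]
        simpa using congr_app (baseChange_key V s t f g α H) e.left
      have n4 : (f.lanUnit.app H).app (s.obj e.left) ≫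
          (f.lan.obj H).map (α.app e.left ≫ g.map e.hom) ≫ i₂.hom =
          colimit.ι (CostructuredArrow.proj f (g.obj c) ⋙ H)
            (CostructuredArrow.mk (α.app e.left ≫ g.map e.hom)) :=
        f.ι_leftKanExtensionObjIsoColimit_hom H (g.obj c)
          (CostructuredArrow.mk (α.app e.left ≫ g.map e.hom))
      have n5 : (t.lanUnit.app (s ⋙ H)).app e.left ≫ (t.lan.obj (s ⋙ H)).map e.hom ≫
          Ξ.app c ≫ i₂.hom =
          colimit.ι (CostructuredArrow.proj f (g.obj c) ⋙ H) ((BCAux.commaG f g c).obj e) := by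
        rw [reassoc_of% n2, reassoc_of% n3, ← Functor.map_comp_assoc, n4]
        rfl
      exact ((reassoc_of% n1) (Ξ.app c ≫ i₂.hom)).trans ((Category.assoc _ _ _).trans n5)
    have hΞc : Ξ.app c = i₁.hom ≫
        colimit.pre (CostructuredArrow.proj f (g.obj c) ⋙ H) (BCAux.commaG f g c) ≫ i₂.inv := by
      rw [← main]
      simp
    rw [hΞc]
    haveI : IsIso (colimit.pre (CostructuredArrow.proj f (g.obj c) ⋙ H) (BCAux.commaG f g c)) :=
      Functor.Final.colimit_pre_isIso (BCAux.commaG f g c) (G := CostructuredArrow.proj f (g.obj c) ⋙ H)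
    exact IsIso.comp_isIso' inferInstance (IsIso.comp_isIso' this inferInstance)
  have step : ∀ (H : B ⥤ V), IsIso ((baseChange V (Comma.fst f g) (Comma.snd f g) f g
      (Comma.natTrans f g)).app H) := by
    intro H
    have := key H
    exact NatIso.isIso_of_isIso_app _
  exact NatIso.isIso_of_isIso_app _
end

section
/- Let f : B → D and g : C → D be functors between small categories and V a bicomplete category. For the comma square with projections s : f ↓ g → B and t : f ↓ g → C, the dual base change natural transformation f^* g_* ⟹ s_* t^* is a natural isomorphism of functors Fun(C, V) → Fun(B, V). -/
open CategoryTheory CategoryTheory.Limits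
universe v w u

section BaseChange
variable {A B C D : Type u} [SmallCategory A] [SmallCategory B] [SmallCategory C] [SmallCategory D]
variable (V : Type v) [Category.{w} V] [HasLimitsOfSize.{u,u} V]

/-- The dual base change natural transformation `f^* g_* ⟶ s_* t^*` of a lax square,
built from the unit of `g^* ⊣ g_*` and the counit of `s^* ⊣ s_*`. -/
noncomputable def coBaseChange (s : A ⥤ B) (t : A ⥤ C) (f : B ⥤ D) (g : C ⥤ D)
    (α : s ⋙ f ⟶ t ⋙ g) :
    (Functor.ran g ⋙ (Functor.whiskeringLeft B D V).obj f : (C ⥤ V) ⥤ (B ⥤ V)) ⟶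
      (Functor.whiskeringLeft A C V).obj t ⋙ Functor.ran s :=
  Functor.whiskerLeft (Functor.ran g ⋙ (Functor.whiskeringLeft B D V).obj f) (s.ranAdjunction V).unit ≫
    Functor.whiskerRight (Functor.whiskerLeft (Functor.ran g) (restrictionSquare V s t f g α)) (Functor.ran s) ≫
    Functor.whiskerRight (g.ranAdjunction V).counit ((Functor.whiskeringLeft A C V).obj t ⋙ Functor.ran s)

end BaseChange

section CommaAux
variable {B C D : Type u} [SmallCategory B] [SmallCategory C] [SmallCategory D]
variable (f : B ⥤ D) (g : C ⥤ D) (b : B)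

/-- The comma object associated to `ψ : f b ⟶ g c`. -/
@[simps]
def commaMkObj (x : StructuredArrow (f.obj b) g) : Comma f g := ⟨b, x.right, x.hom⟩

/-- The functor sending `ψ : f b ⟶ g c` to the comma object `(b, c, ψ)` with identity leg. -/
@[simps]
def commaMkFunctor : StructuredArrow (f.obj b) g ⥤ StructuredArrow b (Comma.fst f g) where
  obj x := StructuredArrow.mk (Y := commaMkObj f g b x) (𝟙 b)
  map {x y} u := StructuredArrow.homMk ⟨𝟙 b, u.right, by show f.map (𝟙 b) ≫ y.hom = x.hom ≫ g.map u.right; simp⟩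
    (Category.comp_id _)
  map_id _ := by
    apply StructuredArrow.hom_ext
    apply CommaMorphism.ext <;> rfl
  map_comp _ _ := by
    apply StructuredArrow.hom_ext
    apply CommaMorphism.ext
    · exact (Category.comp_id _).symm
    · rfl

/-- The right adjoint of `commaMkFunctor`. -/
@[simps]
def commaProjFunctor : StructuredArrow b (Comma.fst f g) ⥤ StructuredArrow (f.obj b) g where
  obj a := StructuredArrow.mk (Y := a.right.right) (f.map a.hom ≫ a.right.hom)
  map {a a'} u := StructuredArrow.homMk u.right.right (by
    have h1 : a.hom ≫ u.right.left = a'.hom := by simpa using StructuredArrow.w u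
    have h2 := u.right.w
    dsimp at h2 ⊢
    rw [Category.assoc, ← h2, ← h1, f.map_comp, Category.assoc])

/-- `commaMkFunctor` is left adjoint to `commaProjFunctor`. -/
def commaAdj : commaMkFunctor f g b ⊣ commaProjFunctor f g b :=
  Adjunction.mkOfHomEquiv
    { homEquiv := fun x a =>
      { toFun := fun m => StructuredArrow.homMk m.right.right (by
          have h1 : 𝟙 b ≫ m.right.left = a.hom := StructuredArrow.w m
          have h2 := m.right.w
          exact h2.symm.trans (congrArg (fun k => f.map k ≫ a.right.hom)
            ((Category.id_comp _).symm.trans h1)))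
        invFun := fun n => StructuredArrow.homMk
          ⟨a.hom, n.right, by exact (StructuredArrow.w n).symm⟩ (Category.id_comp _)
        left_inv := fun m => by
          have h1 : 𝟙 b ≫ m.right.left = a.hom := StructuredArrow.w m
          apply StructuredArrow.hom_ext
          apply CommaMorphism.ext
          · exact h1.symm.trans (Category.id_comp _)
          · rfl
        right_inv := fun n => by apply StructuredArrow.hom_ext; rfl }
      homEquiv_naturality_left_symm := by
        intros
        apply StructuredArrow.hom_ext
        apply CommaMorphism.ext
        · exact (Category.id_comp _).symm
        · rfl
      homEquiv_naturality_right := by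
        intros
        apply StructuredArrow.hom_ext
        rfl }

instance : (commaMkFunctor f g b).Initial :=
  Functor.initial_of_adjunction (commaAdj f g b)

end CommaAux

section MainAux
variable {B C D : Type u} [SmallCategory B] [SmallCategory C] [SmallCategory D]
variable (V : Type v) [Category.{w} V] [HasLimitsOfSize.{u,u} V]
variable (f : B ⥤ D) (g : C ⥤ D)

/-- The canonical extension datum on `f ⋙ g_* H`. -/
noncomputable def auxEta (H : C ⥤ V) :
    Comma.fst f g ⋙ (f ⋙ g.ran.obj H) ⟶ Comma.snd f g ⋙ H :=
  Functor.whiskerRight (Comma.natTrans f g) (g.ran.obj H) ≫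
    Functor.whiskerLeft (Comma.snd f g) (g.ranCounit.app H)

/-- `(f ⋙ g_* H, auxEta)` is a pointwise right Kan extension along `Comma.fst f g`. -/
noncomputable def auxIsPointwise (H : C ⥤ V) :
    (Functor.RightExtension.mk (f ⋙ g.ran.obj H) (auxEta V f g H)).IsPointwiseRightKanExtension :=
  fun b => by
    refine (Functor.Initial.isLimitWhiskerEquiv (commaMkFunctor f g b)
      ((Functor.RightExtension.mk (f ⋙ g.ran.obj H) (auxEta V f g H)).coneAt b)) ?_
    refine IsLimit.ofIsoLimit
      ((Functor.isPointwiseRightKanExtensionRanCounit g H (f.obj b)))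
      (Cones.ext (Iso.refl _) (fun j => ?_))
    dsimp [auxEta]
    simp
    change (g.ran.obj H).map j.hom ≫ (g.ranCounit.app H).app j.right =
      𝟙 _ ≫ (g.ran.obj H).map (f.map (𝟙 b)) ≫ (g.ran.obj H).map j.hom ≫
        (g.ranCounit.app H).app j.right
    simp

noncomputable instance auxIsRKE (H : C ⥤ V) :
    (f ⋙ g.ran.obj H).IsRightKanExtension (auxEta V f g H) :=
  (auxIsPointwise V f g H).isRightKanExtension

lemma auxFactor (H : C ⥤ V) :
    (coBaseChange V (Comma.fst f g) (Comma.snd f g) f g (Comma.natTrans f g)).app H =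
      ((Comma.fst f g).ranAdjunction V).unit.app (f ⋙ g.ran.obj H) ≫
        (Comma.fst f g).ran.map (auxEta V f g H) := by
  dsimp [coBaseChange, restrictionSquare, auxEta]
  rw [Functor.ranAdjunction_counit, ← Functor.map_comp]

lemma auxComm (H : C ⥤ V) :
    Functor.whiskerLeft (Comma.fst f g)
        ((coBaseChange V (Comma.fst f g) (Comma.snd f g) f g (Comma.natTrans f g)).app H) ≫
      (Comma.fst f g).ranCounit.app (Comma.snd f g ⋙ H) = auxEta V f g H := by
  rw [auxFactor, Functor.whiskerLeft_comp, Category.assoc]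
  have h2 : Functor.whiskerLeft (Comma.fst f g) ((Comma.fst f g).ran.map (auxEta V f g H)) ≫
        (Comma.fst f g).ranCounit.app (Comma.snd f g ⋙ H) =
      (Comma.fst f g).ranCounit.app (Comma.fst f g ⋙ (f ⋙ g.ran.obj H)) ≫ auxEta V f g H :=
    (Comma.fst f g).ranCounit.naturality (auxEta V f g H)
  rw [h2, ← Category.assoc,
    Functor.ranCounit_app_whiskerLeft_ranAdjunction_unit_app]
  simp

end MainAux

/-- **Dual base change along a comma (flow product) square is an isomorphism:**
for the comma square with projections `s : f ↓ g ⥤ B`, `t : f ↓ g ⥤ C`, the dual base change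
transformation `f^* g_* ⟶ s_* t^*` is a natural isomorphism. -/
theorem coBaseChange_comma_isIso {B C D : Type u} [SmallCategory B] [SmallCategory C]
    [SmallCategory D] (f : B ⥤ D) (g : C ⥤ D)
    (V : Type v) [Category.{w} V] [HasLimitsOfSize.{u,u} V] [HasColimitsOfSize.{u,u} V] :
    IsIso (coBaseChange V (Comma.fst f g) (Comma.snd f g) f g (Comma.natTrans f g)) := by
  have : ∀ H : C ⥤ V,
      IsIso ((coBaseChange V (Comma.fst f g) (Comma.snd f g) f g (Comma.natTrans f g)).app H) := by
    intro H
    exact (Functor.isRightKanExtension_iff_isIso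
      (F' := (Comma.fst f g).ran.obj (Comma.snd f g ⋙ H))
      ((coBaseChange V (Comma.fst f g) (Comma.snd f g) f g (Comma.natTrans f g)).app H)
      ((Comma.fst f g).ranCounit.app (Comma.snd f g ⋙ H)) (auxEta V f g H)
      (auxComm V f g H)).mp (auxIsRKE V f g H)
  exact NatIso.isIso_of_isIso_app _
end

section
/- Let s : A → B and t : A → C be functors of small categories and let D = B ↑_A C be the flow sum (cocomma category) with inclusions f : B → D and g : C → D. Then for every object c of C, the induced functor from the comma category t ↓ c to the comma category f ↓ g(c), sending (a, φ : t(a) → c) to (s(a), composite f(s(a)) → g(t(a)) → g(c)), is cofinal (final). -/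
open CategoryTheory
universe w v u
variable {A B C : Type u} [SmallCategory A] [SmallCategory B] [SmallCategory C]

variable (s : A ⥤ B) (t : A ⥤ C)

/-- The canonical functor `t ↓ c ⥤ f ↓ g(c)` induced by `s`, where `f, g` are the
inclusions of `B` and `C` into the cocomma category. -/
def cocommaCostructuredMap (c : C) :
    CostructuredArrow t c ⥤ CostructuredArrow (Cocomma.inlF s t) ((Cocomma.inrF s t).obj c) where
  obj x := CostructuredArrow.mk
    (Quot.mk _ ⟨x.left, 𝟙 _, x.hom⟩ :
      (Cocomma.inlF s t).obj (s.obj x.left) ⟶ (Cocomma.inrF s t).obj c)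
  map {x y} θ := CostructuredArrow.homMk (s.map θ.left) (by
    show Quot.mk (CocommaRel s t (s.obj x.left) c)
        ⟨y.left, s.map θ.left ≫ 𝟙 (s.obj y.left), y.hom⟩ =
      Quot.mk (CocommaRel s t (s.obj x.left) c) ⟨x.left, 𝟙 (s.obj x.left), x.hom⟩
    have h1 : (⟨y.left, s.map θ.left ≫ 𝟙 _, y.hom⟩ : CocommaWord s t (s.obj x.left) c)
        = ⟨y.left, 𝟙 _ ≫ s.map θ.left, y.hom⟩ := by simp
    have h2 := Quot.sound (CocommaRel.mk (s := s) (t := t) θ.left (𝟙 (s.obj x.left)) y.hom)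
    have h3 : (⟨x.left, 𝟙 _, t.map θ.left ≫ y.hom⟩ : CocommaWord s t (s.obj x.left) c)
        = ⟨x.left, 𝟙 _, x.hom⟩ := by rw [CostructuredArrow.w θ]
    rw [h1, ← h3]
    exact h2.symm)


section Aux

variable {s t} in
/-- The object of `StructuredArrow d (cocommaCostructuredMap s t c)` determined by a word
representing `d.hom`. -/
def objOf {c : C} (d : CostructuredArrow (Cocomma.inlF s t) ((Cocomma.inrF s t).obj c))
    (w : CocommaWord s t d.left c) (h : Quot.mk _ w = d.hom) :
    StructuredArrow d (cocommaCostructuredMap s t c) :=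
  StructuredArrow.mk (Y := CostructuredArrow.mk w.r)
    (CostructuredArrow.homMk w.l (by
      show Quot.mk (CocommaRel s t d.left c) ⟨w.pt, w.l ≫ 𝟙 _, w.r⟩ = d.hom
      rw [Category.comp_id]
      exact h))

variable {s t} in
lemma zigzag_of_eqvGen {c : C} {d : CostructuredArrow (Cocomma.inlF s t) ((Cocomma.inrF s t).obj c)}
    {w w' : CocommaWord s t d.left c}
    (e : Relation.EqvGen (CocommaRel s t d.left c) w w')
    (h : Quot.mk _ w = d.hom) (h' : Quot.mk _ w' = d.hom) :
    Zigzag (objOf d w h) (objOf d w' h') := by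
  induction e with
  | rel x y r =>
      obtain ⟨θ, φ, ψ⟩ := r
      refine Zigzag.of_hom (StructuredArrow.homMk (CostructuredArrow.homMk θ rfl) ?_)
      apply CostructuredArrow.ext
      show φ ≫ s.map θ = φ ≫ s.map θ
      rfl
  | refl x => exact Zigzag.refl _
  | symm x y r ih => exact (ih (Quot.eqvGen_sound r.symm ▸ h) h).symm
  | trans x y z r1 r2 ih1 ih2 =>
      exact (ih1 h (Quot.eqvGen_sound r1.symm ▸ h)).trans
        (ih2 (Quot.eqvGen_sound r1.symm ▸ h) h')

variable {s t} in
lemma zigzag_objOf {c : C} {d : CostructuredArrow (Cocomma.inlF s t) ((Cocomma.inrF s t).obj c)}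
    (X : StructuredArrow d (cocommaCostructuredMap s t c)) :
    ∃ (w : CocommaWord s t d.left c) (h : Quot.mk _ w = d.hom), Zigzag X (objOf d w h) := by
  refine ⟨⟨X.right.left, X.hom.left, X.right.hom⟩, ?_, ?_⟩
  · have hw := CostructuredArrow.w X.hom
    dsimp [cocommaCostructuredMap, Cocomma.inlF] at hw ⊢
    rw [← hw]
    show Quot.mk _ _ = Quot.mk (CocommaRel s t d.left c) ⟨X.right.left, X.hom.left ≫ 𝟙 _, X.right.hom⟩
    erw [Category.comp_id]
  · refine Zigzag.of_hom (StructuredArrow.homMk (CostructuredArrow.homMk (𝟙 X.right.left)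
      (by simp [objOf])) ?_)
    apply CostructuredArrow.ext
    simp [objOf, cocommaCostructuredMap, Cocomma.inlF]
    show X.hom.left ≫ s.map (𝟙 X.right.left) = X.hom.left
    simp
    exact Category.comp_id _

end Aux

/-- **Cofinality of the induced functor `t ↓ c ⥤ f ↓ g(c)` for a cocomma square:** for every
object `c` of `C`, the functor sending `(a, φ : t(a) → c)` to `(s(a), f(s(a)) → g(t(a)) → g(c))`
is cofinal (final). -/
theorem cocommaCostructuredMap_final (c : C) : (cocommaCostructuredMap s t c).Final := by
  constructor
  intro d
  obtain ⟨w0, hw0⟩ := Quot.exists_rep d.hom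
  have : Nonempty (StructuredArrow d (cocommaCostructuredMap s t c)) := ⟨objOf d w0 hw0⟩
  apply zigzag_isConnected
  intro X Y
  obtain ⟨w1, h1, z1⟩ := zigzag_objOf X
  obtain ⟨w2, h2, z2⟩ := zigzag_objOf Y
  have e : Relation.EqvGen (CocommaRel s t d.left c) w1 w2 :=
    Quot.eqvGen_exact (h1.trans h2.symm)
  exact (z1.trans (zigzag_of_eqvGen e h1 h2)).trans z2.symm
end

section
/- Let s : A → B and t : A → C be functors of small categories and V a bicomplete category. For the cocomma square, with D = B ↑_A C the cocomma category, inclusions f : B → D and g : C → D, and the canonical natural transformation f ∘ s ⟹ g ∘ t, the base change natural transformation t_! s^* ⟹ g^* f_! is a natural isomorphism of functors Fun(B, V) → Fun(C, V). -/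
open CategoryTheory CategoryTheory.Limits
universe v w u

variable {A B C : Type u} [SmallCategory A] [SmallCategory B] [SmallCategory C]

variable (s : A ⥤ B) (t : A ⥤ C)

section Aux

variable (c : C)

/-- The comparison functor from `t/c` to `f/(g c)`. -/
@[simps]
def cocommaComparison :
    CostructuredArrow t c ⥤ CostructuredArrow (Cocomma.inlF s t) ((Cocomma.inrF s t).obj c) where
  obj j := CostructuredArrow.mk
    (Y := s.obj j.left)
    (show Quot (CocommaRel s t (s.obj j.left) c) from Quot.mk _ ⟨j.left, 𝟙 _, j.hom⟩)
  map {j j'} θ := CostructuredArrow.homMk (s.map θ.left) (by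
    have hw : t.map θ.left ≫ j'.hom = j.hom := CostructuredArrow.w θ
    show Quot.mk _ _ = Quot.mk _ _
    dsimp
    have h1 : (⟨j'.left, (Cocomma.inlF s t).map (s.map θ.left) ≫ 𝟙 _, j'.hom⟩ :
        CocommaWord s t (s.obj j.left) c)
        = ⟨j'.left, 𝟙 _ ≫ s.map θ.left, j'.hom⟩ := by simp [Cocomma.inlF]
    rw [h1]
    have h2 : Quot.mk (CocommaRel s t (s.obj j.left) c)
          ⟨j.left, 𝟙 _, t.map θ.left ≫ j'.hom⟩ =
        Quot.mk (CocommaRel s t (s.obj j.left) c) ⟨j'.left, 𝟙 _ ≫ s.map θ.left, j'.hom⟩ :=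
      Quot.sound (CocommaRel.mk (s := s) (t := t) θ.left (𝟙 (s.obj j.left)) j'.hom)
    erw [← h2, hw]
    rfl)
  map_id j := by apply CostructuredArrow.hom_ext; simp; rfl
  map_comp θ θ' := by apply CostructuredArrow.hom_ext; simp

variable {s t c}

/-- Build an object of `StructuredArrow d (cocommaComparison s t c)` from a word. -/
def toObj (d : CostructuredArrow (Cocomma.inlF s t) ((Cocomma.inrF s t).obj c))
    (w : CocommaWord s t d.left c) (hw : Quot.mk _ w = d.hom) :
    StructuredArrow d (cocommaComparison s t c) :=
  StructuredArrow.mk (Y := CostructuredArrow.mk w.r) (CostructuredArrow.homMk w.l (by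
    show Quot.mk _ _ = d.hom
    dsimp
    rw [← hw]
    congr 1
    simp [Cocomma.inlF]
    erw [Category.comp_id]))

/-- Build a morphism in `StructuredArrow d (cocommaComparison s t c)`. -/
def toHom {d : CostructuredArrow (Cocomma.inlF s t) ((Cocomma.inrF s t).obj c)}
    (X Y : StructuredArrow d (cocommaComparison s t c))
    (θ : X.right.left ⟶ Y.right.left)
    (h1 : t.map θ ≫ Y.right.hom = X.right.hom)
    (h2 : X.hom.left ≫ s.map θ = Y.hom.left) : X ⟶ Y :=
  StructuredArrow.homMk (CostructuredArrow.homMk θ h1) (by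
    apply CostructuredArrow.hom_ext
    exact h2)

lemma zigzag_toObj {d : CostructuredArrow (Cocomma.inlF s t) ((Cocomma.inrF s t).obj c)} :
    ∀ {w w' : CocommaWord s t d.left c},
      Relation.EqvGen (CocommaRel s t d.left c) w w' →
      ∀ (hw : Quot.mk _ w = d.hom) (hw' : Quot.mk _ w' = d.hom),
        Zigzag (toObj d w hw) (toObj d w' hw') := by
  intro w w' h
  induction h with
  | rel x y hxy =>
      intro hw hw'
      obtain ⟨θ, φ, ψ⟩ := hxy
      exact Zigzag.of_hom (toHom _ _ θ (by simp [toObj]) (by simp [toObj]; rfl))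
  | refl x => intro hw hw'; exact Zigzag.refl _
  | symm x y _ ih => intro hw hw'; exact (ih hw' hw).symm
  | trans x y z hxy _ ih ih' =>
      intro hw hw'
      have hy : Quot.mk _ y = d.hom := by rw [← hw]; exact (Quot.eq.2 hxy).symm
      exact (ih hw hy).trans (ih' hy hw')

instance cocommaComparison_final : (cocommaComparison s t c).Final := by
  constructor
  intro d
  obtain ⟨w₀, hw₀⟩ := Quot.exists_rep d.hom
  haveI : Nonempty (StructuredArrow d (cocommaComparison s t c)) := ⟨toObj d w₀ hw₀⟩
  apply zigzag_isConnected
  intro X Y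
  have hX : Quot.mk _ (⟨X.right.left, X.hom.left, X.right.hom⟩ :
      CocommaWord s t d.left c) = d.hom := by
    have h : (Cocomma.inlF s t).map X.hom.left ≫
        ((cocommaComparison s t c).obj X.right).hom = d.hom := CostructuredArrow.w X.hom
    rw [← h]
    show Quot.mk _ _ = Quot.mk _ _
    congr 1
    simp [Cocomma.inlF]
    erw [Category.comp_id]
  have hY : Quot.mk _ (⟨Y.right.left, Y.hom.left, Y.right.hom⟩ :
      CocommaWord s t d.left c) = d.hom := by
    have h : (Cocomma.inlF s t).map Y.hom.left ≫
        ((cocommaComparison s t c).obj Y.right).hom = d.hom := CostructuredArrow.w Y.hom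
    rw [← h]
    show Quot.mk _ _ = Quot.mk _ _
    congr 1
    simp [Cocomma.inlF]
    erw [Category.comp_id]
  have zX : Zigzag X (toObj d ⟨X.right.left, X.hom.left, X.right.hom⟩ hX) :=
    Zigzag.of_hom (toHom _ _ (𝟙 _) (by simp [toObj]) (by simp [toObj]; erw [Category.comp_id]))
  have zY : Zigzag Y (toObj d ⟨Y.right.left, Y.hom.left, Y.right.hom⟩ hY) :=
    Zigzag.of_hom (toHom _ _ (𝟙 _) (by simp [toObj]) (by simp [toObj]; erw [Category.comp_id]))
  exact (zX.trans (zigzag_toObj (Quot.eq.1 (hX.trans hY.symm)) hX hY)).trans zY.symm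

end Aux

section KanAux

variable (V : Type v) [Category.{w} V] [HasColimitsOfSize.{u,u} V] (H : B ⥤ V)

/-- The canonical transformation `s ⋙ H ⟶ t ⋙ (g ⋙ f_! H)`. -/
noncomputable def betaCocomma :
    s ⋙ H ⟶ t ⋙ (Cocomma.inrF s t ⋙ (Cocomma.inlF s t).lan.obj H) :=
  Functor.whiskerLeft s ((Cocomma.inlF s t).lanUnit.app H) ≫
    (Functor.associator s (Cocomma.inlF s t) ((Cocomma.inlF s t).lan.obj H)).inv ≫
    Functor.whiskerRight (Cocomma.natTrans s t) ((Cocomma.inlF s t).lan.obj H) ≫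
    (Functor.associator t (Cocomma.inrF s t) ((Cocomma.inlF s t).lan.obj H)).hom

lemma betaCocomma_app (a : A) :
    (betaCocomma s t V H).app a =
      ((Cocomma.inlF s t).lanUnit.app H).app (s.obj a) ≫
        ((Cocomma.inlF s t).lan.obj H).map ((Cocomma.natTrans s t).app a) := by
  simp [betaCocomma]

/-- `g ⋙ f_! H` with `betaCocomma` is a pointwise left Kan extension of `s ⋙ H` along `t`. -/
noncomputable def isPointwiseBeta :
    (Functor.LeftExtension.mk _ (betaCocomma s t V H)).IsPointwiseLeftKanExtension := by
  intro c
  have h1 := (Functor.isPointwiseLeftKanExtensionLeftKanExtensionUnit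
    (Cocomma.inlF s t) H) ((Cocomma.inrF s t).obj c)
  have h2 := (Functor.Final.isColimitWhiskerEquiv (cocommaComparison s t c) _).symm h1
  refine IsColimit.ofIsoColimit h2 (Cocones.ext (Iso.refl _) (fun j => ?_))
  dsimp [cocommaComparison]
  erw [Category.comp_id]
  change ((Cocomma.inlF s t).leftKanExtensionUnit H).app (s.obj j.left) ≫
      ((Cocomma.inlF s t).leftKanExtension H).map _ =
    (betaCocomma s t V H).app j.left ≫ ((Cocomma.inlF s t).lan.obj H).map ((Cocomma.inrF s t).map j.hom)
  rw [betaCocomma_app]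
  rw [Category.assoc, ← Functor.map_comp]
  have harr : ((Cocomma.natTrans s t).app j.left ≫ (Cocomma.inrF s t).map j.hom :
      (Cocomma.inlF s t).obj (s.obj j.left) ⟶ (Cocomma.inrF s t).obj c) =
      Quot.mk _ ⟨j.left, 𝟙 _, j.hom⟩ := by
    show Quot.mk _ _ = Quot.mk _ _
    congr 1
    simp [Cocomma.inrF]
  rw [harr]
  rfl

lemma comm_baseChange :
    t.lanUnit.app (s ⋙ H) ≫
        Functor.whiskerLeft t ((baseChange V s t (Cocomma.inlF s t) (Cocomma.inrF s t)
          (Cocomma.natTrans s t)).app H) =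
      betaCocomma s t V H := by
  set f := Cocomma.inlF s t
  set g := Cocomma.inrF s t
  set α := Cocomma.natTrans s t
  have inner : s ⋙ H ⟶ t ⋙ (g ⋙ f.lan.obj H) :=
    Functor.whiskerLeft s (f.lanUnit.app H) ≫ Functor.whiskerRight α (f.lan.obj H)
  have hφ : (baseChange V s t f g α).app H =
      t.lan.map (Functor.whiskerLeft s (f.lanUnit.app H) ≫ Functor.whiskerRight α (f.lan.obj H)) ≫
        (t.lanAdjunction V).counit.app (g ⋙ f.lan.obj H) := by
    simp [baseChange, restrictionSquare, Functor.lanAdjunction_unit]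
  rw [hφ, Functor.whiskerLeft_comp, ← Category.assoc]
  have hnat : t.lanUnit.app (s ⋙ H) ≫
      Functor.whiskerLeft t (t.lan.map (Functor.whiskerLeft s (f.lanUnit.app H) ≫ Functor.whiskerRight α (f.lan.obj H)))
      = (Functor.whiskerLeft s (f.lanUnit.app H) ≫ Functor.whiskerRight α (f.lan.obj H)) ≫
          t.lanUnit.app (t ⋙ (g ⋙ f.lan.obj H)) := by
    exact (t.lanUnit.naturality
      (Functor.whiskerLeft s (f.lanUnit.app H) ≫ Functor.whiskerRight α (f.lan.obj H))).symm
  rw [hnat, Category.assoc, Functor.lanUnit_app_whiskerLeft_lanAdjunction_counit_app]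
  ext a
  simp [betaCocomma]
  erw [Category.comp_id]

end KanAux

/-- **Base change along a cocomma (flow sum) square is an isomorphism:** for the cocomma
square with inclusions `f : B ⥤ B ↑_A C` and `g : C ⥤ B ↑_A C`, the base change
transformation `t_! s^* ⟶ g^* f_!` is a natural isomorphism. -/
theorem baseChange_cocomma_isIso
    {A B C : Type u} [SmallCategory A] [SmallCategory B] [SmallCategory C]
    (s : A ⥤ B) (t : A ⥤ C)
    (V : Type v) [Category.{w} V] [HasColimitsOfSize.{u,u} V] [HasLimitsOfSize.{u,u} V] :
    IsIso (baseChange V s t (Cocomma.inlF s t) (Cocomma.inrF s t) (Cocomma.natTrans s t)) := by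
  haveI : ∀ H : B ⥤ V, IsIso ((baseChange V s t (Cocomma.inlF s t) (Cocomma.inrF s t)
      (Cocomma.natTrans s t)).app H) := by
    intro H
    haveI hF' : ((((Functor.whiskeringLeft A B V).obj s ⋙ t.lan)).obj H).IsLeftKanExtension
        (t.lanUnit.app (s ⋙ H)) :=
      inferInstanceAs ((t.lan.obj (s ⋙ H)).IsLeftKanExtension (t.lanUnit.app (s ⋙ H)))
    haveI hG : (Cocomma.inrF s t ⋙ (Cocomma.inlF s t).lan.obj H).IsLeftKanExtension
        (betaCocomma s t V H) := (isPointwiseBeta s t V H).isLeftKanExtension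
    exact (Functor.isLeftKanExtension_iff_isIso
      ((baseChange V s t (Cocomma.inlF s t) (Cocomma.inrF s t) (Cocomma.natTrans s t)).app H)
      (t.lanUnit.app (s ⋙ H)) (betaCocomma s t V H) (comm_baseChange s t V H)).1 hG
  exact NatIso.isIso_of_isIso_app _
end

section
/- The comma construction is associative: for a chain of functors A → B ← C → D ← E, there are canonical isomorphisms of categories (A ↓_B C) ↓_D E ≅ (A ↓_B C) ×_C (C ↓_D E) ≅ A ↓_B (C ↓_D E), where the outer comma categories are formed using the composite functors through the projections. -/
open CategoryTheory
universe u

section Aux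
variable {A B C D E : Type u} [SmallCategory A] [SmallCategory B] [SmallCategory C]
    [SmallCategory D] [SmallCategory E]
    (f : A ⥤ B) (g : C ⥤ B) (h : C ⥤ D) (k : E ⥤ D)

def F1 : Comma (Comma.snd f g ⋙ h) k ⥤ CatPullback (Comma.snd f g) (Comma.fst h k) where
  obj x := ⟨x.left, ⟨x.left.right, x.right, x.hom⟩, rfl⟩
  map {x y} φ := ⟨(φ.left, ⟨φ.left.right, φ.right, φ.w⟩), by simp⟩
  map_id x := by apply Subtype.ext; rfl
  map_comp φ ψ := by apply Subtype.ext; rfl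

def G1 : CatPullback (Comma.snd f g) (Comma.fst h k) ⥤ Comma (Comma.snd f g ⋙ h) k where
  obj p := ⟨p.left, p.right.right,
    cast (congrArg (fun c => h.obj c ⟶ k.obj p.right.right) p.eq).symm p.right.hom⟩
  map {p q} φ := ⟨φ.1.1, φ.1.2.right, by
    have h2 := φ.2
    obtain ⟨pl, ⟨prl, prr, prh⟩, (pe : pl.right = prl)⟩ := p
    obtain ⟨ql, ⟨qrl, qrr, qrh⟩, (qe : ql.right = qrl)⟩ := q
    subst pe; subst qe
    simp only [Comma.snd_map, Comma.fst_map, eqToHom_refl, Category.comp_id,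
      Category.id_comp] at h2
    simpa [h2] using φ.1.2.w⟩
  map_id p := by aesop_cat
  map_comp φ ψ := by aesop_cat

def F2 : Comma f (Comma.fst h k ⋙ g) ⥤ CatPullback (Comma.snd f g) (Comma.fst h k) where
  obj x := ⟨⟨x.left, x.right.left, x.hom⟩, x.right, rfl⟩
  map {x y} φ := ⟨(⟨φ.left, φ.right.left, φ.w⟩, φ.right), by simp⟩
  map_id x := by apply Subtype.ext; rfl
  map_comp φ ψ := by apply Subtype.ext; rfl

def G2 : CatPullback (Comma.snd f g) (Comma.fst h k) ⥤ Comma f (Comma.fst h k ⋙ g) where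
  obj p := ⟨p.left.left, p.right,
    cast (congrArg (fun c => f.obj p.left.left ⟶ g.obj c) p.eq) p.left.hom⟩
  map {p q} φ := ⟨φ.1.1.left, φ.1.2, by
    have h2 := φ.2
    obtain ⟨⟨pll, plr, plh⟩, pr, (pe : plr = pr.left)⟩ := p
    obtain ⟨⟨qll, qlr, qlh⟩, qr, (qe : qlr = qr.left)⟩ := q
    subst pe; subst qe
    simp only [Comma.snd_map, Comma.fst_map, eqToHom_refl, Category.comp_id,
      Category.id_comp] at h2
    simpa [← h2] using φ.1.1.w⟩
  map_id p := by aesop_cat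
  map_comp φ ψ := by aesop_cat

end Aux

/-- **Associativity of the comma construction:** for a chain `A → B ← C → D ← E`,
one has canonical isomorphisms of categories
`(A ↓_B C) ↓_D E ≅ (A ↓_B C) ×_C (C ↓_D E) ≅ A ↓_B (C ↓_D E)`. -/
theorem comma_assoc
    {A B C D E : Type u} [SmallCategory A] [SmallCategory B] [SmallCategory C]
    [SmallCategory D] [SmallCategory E]
    (f : A ⥤ B) (g : C ⥤ B) (h : C ⥤ D) (k : E ⥤ D) :
    (∃ e₁ : Comma (Comma.snd f g ⋙ h) k ⥤ CatPullback (Comma.snd f g) (Comma.fst h k),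
        IsCatIso e₁) ∧
      (∃ e₂ : Comma f (Comma.fst h k ⋙ g) ⥤ CatPullback (Comma.snd f g) (Comma.fst h k),
        IsCatIso e₂) := by
  constructor
  · refine ⟨F1 f g h k, G1 f g h k, ?_, ?_⟩
    · rfl
    · fapply CategoryTheory.Functor.ext
      · intro p
        obtain ⟨pl, ⟨prl, prr, prh⟩, (pe : pl.right = prl)⟩ := p
        subst pe
        rfl
      · intro x y φ
        obtain ⟨xl, ⟨xrl, xrr, xrh⟩, (xe : xl.right = xrl)⟩ := x
        obtain ⟨yl, ⟨yrl, yrr, yrh⟩, (ye : yl.right = yrl)⟩ := y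
        subst xe; subst ye
        obtain ⟨⟨φ1, φ2⟩, hφ⟩ := φ
        simp only [Comma.snd_map, Comma.fst_map, eqToHom_refl, Category.comp_id,
          Category.id_comp] at hφ
        apply Subtype.ext
        simp only [eqToHom_refl, Category.comp_id, Category.id_comp]
        erw [eqToHom_refl (C := CatPullback (Comma.snd f g) (Comma.fst h k)),
          eqToHom_refl (C := CatPullback (Comma.snd f g) (Comma.fst h k)), Category.comp_id, Category.id_comp]
        exact Prod.ext rfl (by ext; exacts [hφ, rfl])
  · refine ⟨F2 f g h k, G2 f g h k, ?_, ?_⟩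
    · rfl
    · fapply CategoryTheory.Functor.ext
      · intro p
        obtain ⟨⟨pll, plr, plh⟩, pr, (pe : plr = pr.left)⟩ := p
        subst pe
        rfl
      · intro x y φ
        obtain ⟨⟨xll, xlr, xlh⟩, xr, (xe : xlr = xr.left)⟩ := x
        obtain ⟨⟨yll, ylr, ylh⟩, yr, (ye : ylr = yr.left)⟩ := y
        subst xe; subst ye
        obtain ⟨⟨φ1, φ2⟩, hφ⟩ := φ
        simp only [Comma.snd_map, Comma.fst_map, eqToHom_refl, Category.comp_id,
          Category.id_comp] at hφ
        apply Subtype.ext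
        simp only [eqToHom_refl, Category.comp_id, Category.id_comp]
        erw [eqToHom_refl (C := CatPullback (Comma.snd f g) (Comma.fst h k)),
          eqToHom_refl (C := CatPullback (Comma.snd f g) (Comma.fst h k)), Category.comp_id, Category.id_comp]
        exact Prod.ext (by ext; exacts [rfl, hφ.symm]) rfl
end

section
/- Small categories form a (non-unital) pseudo-category with morphisms the spans A ← B → C and composition of A ← B → C with C ← D → E given by A ← B ↓_C D → E using the comma category; this composition is associative up to canonical isomorphism. Moreover, for a fixed bicomplete category V, the assignment sending a category A to Fun(A, V) and a span (f : B → A, g : B → C) to the functor g_! f^* : Fun(A, V) → Fun(C, V) is functorial: composition of spans is sent, up to the canonical base change isomorphism, to composition of pull-push functors. -/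
open CategoryTheory CategoryTheory.Limits
universe v w u

section AssocAux
variable {C E : Type u} [SmallCategory C] [SmallCategory E]
variable {S1 S2 S3 : Type u} [SmallCategory S1] [SmallCategory S2] [SmallCategory S3]
variable (g1 : S1 ⥤ C) (f2 : S2 ⥤ C) (g2 : S2 ⥤ E) (f3 : S3 ⥤ E)

/-- The associativity comparison functor for composition of spans of categories. -/
def assocFwd : Comma (Comma.snd g1 f2 ⋙ g2) f3 ⥤ Comma g1 (Comma.fst g2 f3 ⋙ f2) where
  obj X :=
    { left := X.left.left
      right := { left := X.left.right, right := X.right, hom := X.hom }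
      hom := X.left.hom }
  map {X Y} φ :=
    { left := φ.left.left
      right := { left := φ.left.right, right := φ.right, w := φ.w }
      w := φ.left.w }

/-- The inverse associativity comparison functor. -/
def assocBwd : Comma g1 (Comma.fst g2 f3 ⋙ f2) ⥤ Comma (Comma.snd g1 f2 ⋙ g2) f3 where
  obj X :=
    { left := { left := X.left, right := X.right.left, hom := X.hom }
      right := X.right.right
      hom := X.right.hom }
  map {X Y} φ :=
    { left := { left := φ.left, right := φ.right.left, w := φ.w }
      right := φ.right.right
      w := φ.right.w }

end AssocAux

section ExactAux
variable {C : Type u} [SmallCategory C]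
variable {S1 S2 : Type u} [SmallCategory S1] [SmallCategory S2]
variable (g1 : S1 ⥤ C) (f2 : S2 ⥤ C)

/-- The comparison functor of the comma square at `d : S2`, from the costructured arrow
category of the second projection at `d` to the costructured arrow category
of `g1` at `f2.obj d`. -/
@[simps]
def commaToCostructured (d : S2) :
    CostructuredArrow (Comma.snd g1 f2) d ⥤ CostructuredArrow g1 (f2.obj d) where
  obj X := CostructuredArrow.mk (X.left.hom ≫ f2.map X.hom)
  map {X Y} φ := CostructuredArrow.homMk φ.left.left (by
    have h1 := φ.left.w
    have h2 := CostructuredArrow.w φ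
    dsimp at h1 h2 ⊢
    rw [reassoc_of% h1, ← f2.map_comp]
    exact congrArg (fun k => X.left.hom ≫ f2.map k) h2)

variable {g1 f2} in
/-- The canonical object in the fiber of `commaToCostructured` over `Z`. -/
@[simps!]
def canObj {d : S2} (Z : CostructuredArrow g1 (f2.obj d)) :
    StructuredArrow Z (commaToCostructured g1 f2 d) :=
  StructuredArrow.mk (Y := CostructuredArrow.mk (Y := Comma.mk Z.left d Z.hom) (𝟙 d))
    (CostructuredArrow.homMk (𝟙 Z.left) (by simp [commaToCostructured]))

variable {g1 f2} in
/-- An intermediate object connecting `j` to `canObj Z` by a zig-zag. -/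
@[simps!]
def midObj {d : S2} {Z : CostructuredArrow g1 (f2.obj d)}
    (j : StructuredArrow Z (commaToCostructured g1 f2 d)) :
    StructuredArrow Z (commaToCostructured g1 f2 d) :=
  StructuredArrow.mk
    (Y := CostructuredArrow.mk
      (Y := Comma.mk Z.left j.right.left.right (g1.map j.hom.left ≫ j.right.left.hom)) j.right.hom)
    (CostructuredArrow.homMk (𝟙 Z.left)
      (by simpa [commaToCostructured] using CostructuredArrow.w j.hom))

variable {g1 f2} in
/-- The morphism from the intermediate object to `j`. -/
def midToJ {d : S2} {Z : CostructuredArrow g1 (f2.obj d)}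
    (j : StructuredArrow Z (commaToCostructured g1 f2 d)) : midObj j ⟶ j :=
  StructuredArrow.homMk
    (CostructuredArrow.homMk
      { left := j.hom.left
        right := 𝟙 _
        w := by erw [f2.map_id, Category.comp_id]; rfl }
      (Category.id_comp _))
    (by ext; exact Category.id_comp _)

variable {g1 f2} in
/-- The morphism from the intermediate object to the canonical object. -/
def midToCan {d : S2} {Z : CostructuredArrow g1 (f2.obj d)}
    (j : StructuredArrow Z (commaToCostructured g1 f2 d)) : midObj j ⟶ canObj Z :=
  StructuredArrow.homMk
    (CostructuredArrow.homMk
      { left := 𝟙 Z.left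
        right := j.right.hom
        w := by erw [g1.map_id, Category.id_comp, Category.assoc]; have h := (CostructuredArrow.w j.hom).symm; simp [commaToCostructured] at h; exact h }
      (Category.comp_id _))
    (by ext; exact Category.id_comp _)

/-- The comma square is exact: the comparison functor is final. -/
instance commaToCostructured_final (d : S2) : (commaToCostructured g1 f2 d).Final := by
  constructor
  intro Z
  have hne : Nonempty (StructuredArrow Z (commaToCostructured g1 f2 d)) := ⟨canObj Z⟩
  refine zigzag_isConnected (fun j₁ j₂ => ?_)
  have h : ∀ j : StructuredArrow Z (commaToCostructured g1 f2 d), Zigzag j (canObj Z) :=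
    fun j => (Zigzag.of_inv (midToJ j)).trans (Zigzag.of_hom (midToCan j))
  exact (h j₁).trans (h j₂).symm

variable (V : Type v) [Category.{w} V] [HasColimitsOfSize.{u,u} V]

/-- The unit of the comma-square left extension. -/
noncomputable def commaUnit (F : S1 ⥤ V) :
    Comma.fst g1 f2 ⋙ F ⟶ Comma.snd g1 f2 ⋙ (f2 ⋙ g1.lan.obj F) :=
  Functor.whiskerLeft (Comma.fst g1 f2) (g1.lanUnit.app F) ≫
    Functor.whiskerRight (Comma.natTrans g1 f2) (g1.lan.obj F)

/-- `f2 ⋙ g1.lan.obj F` is a pointwise left Kan extension of `fst ⋙ F` along `snd`. -/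
noncomputable def commaExtPointwise (F : S1 ⥤ V) :
    (Functor.LeftExtension.mk (f2 ⋙ g1.lan.obj F)
      (commaUnit g1 f2 V F)).IsPointwiseLeftKanExtension := by
  intro d
  have ht := Functor.isPointwiseLeftKanExtensionOfIsLeftKanExtension
      (g1.lan.obj F) (g1.lanUnit.app F) (f2.obj d)
  have hw : IsColimit
      (((Functor.LeftExtension.mk (g1.lan.obj F) (g1.lanUnit.app F)).coconeAt
        (f2.obj d)).whisker (commaToCostructured g1 f2 d)) :=
    (Functor.Final.isColimitWhiskerEquiv _ _).symm ht
  exact IsColimit.ofIsoColimit hw (Cocones.ext (Iso.refl _) (fun j => by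
    dsimp [commaUnit]
    simp [commaToCostructured]
    erw [Category.comp_id, Category.assoc]
    rfl))

/-- The base change transformation of a comma square is invertible. -/
theorem isIso_commaBaseChange :
    IsIso (baseChange V (Comma.fst g1 f2) (Comma.snd g1 f2) g1 f2 (Comma.natTrans g1 f2)) := by
  suffices h : ∀ F : S1 ⥤ V,
      IsIso ((baseChange V (Comma.fst g1 f2) (Comma.snd g1 f2) g1 f2
        (Comma.natTrans g1 f2)).app F) by
    exact NatIso.isIso_of_isIso_app _
  intro F
  have hB : (baseChange V (Comma.fst g1 f2) (Comma.snd g1 f2) g1 f2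
        (Comma.natTrans g1 f2)).app F =
      (Comma.snd g1 f2).lan.map (commaUnit g1 f2 V F) ≫
        ((Comma.snd g1 f2).lanAdjunction V).counit.app (f2 ⋙ g1.lan.obj F) := by
    dsimp [baseChange, restrictionSquare]
    rw [← Functor.map_comp_assoc, Functor.lanAdjunction_unit]
    rfl
  have hLKE := (commaExtPointwise g1 f2 V F).isLeftKanExtension
  have comm : (Comma.snd g1 f2).lanUnit.app (Comma.fst g1 f2 ⋙ F) ≫
      Functor.whiskerLeft (Comma.snd g1 f2)
        ((baseChange V (Comma.fst g1 f2) (Comma.snd g1 f2) g1 f2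
          (Comma.natTrans g1 f2)).app F) = commaUnit g1 f2 V F := by
    rw [hB, Functor.whiskerLeft_comp, ← Category.assoc]
    have h1 := ((Comma.snd g1 f2).lanUnit (H := V)).naturality (commaUnit g1 f2 V F)
    dsimp at h1
    rw [← h1, Category.assoc,
      Functor.lanUnit_app_whiskerLeft_lanAdjunction_counit_app, Category.comp_id]
  exact (Functor.isLeftKanExtension_iff_isIso _
    ((Comma.snd g1 f2).lanUnit.app (Comma.fst g1 f2 ⋙ F)) _ comm).mp hLKE

end ExactAux

/-- **Spans of small categories form a non-unital pseudo-category, and pull-push is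
functorial.**  Composition of spans by the comma construction is associative up to canonical
isomorphism of categories, and for a bicomplete `V` the pull-push `g_! f^*` of the comma
composite of two spans is naturally isomorphic to the composite of the two pull-pushes, via
the base change isomorphism of the comma square. -/
theorem span_composition_assoc_and_pullPush_functorial
    {A C E G : Type u} [SmallCategory A] [SmallCategory C] [SmallCategory E] [SmallCategory G]
    {S1 S2 S3 : Type u} [SmallCategory S1] [SmallCategory S2] [SmallCategory S3]
    (f1 : S1 ⥤ A) (g1 : S1 ⥤ C) (f2 : S2 ⥤ C) (g2 : S2 ⥤ E) (f3 : S3 ⥤ E) (g3 : S3 ⥤ G)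
    (V : Type v) [Category.{w} V] [HasColimitsOfSize.{u,u} V] [HasLimitsOfSize.{u,u} V] :
    -- associativity of span composition up to canonical isomorphism of categories
    (∃ e : Comma (Comma.snd g1 f2 ⋙ g2) f3 ⥤ Comma g1 (Comma.fst g2 f3 ⋙ f2), IsCatIso e) ∧
    -- the comma square is Guitart exact: its base change transformation is invertible
    IsIso (baseChange V (Comma.fst g1 f2) (Comma.snd g1 f2) g1 f2 (Comma.natTrans g1 f2)) ∧
    -- hence pull-push along the composite span is the composite of the pull-pushes
    Nonempty
      (((Functor.whiskeringLeft (Comma g1 f2) A V).obj (Comma.fst g1 f2 ⋙ f1) ⋙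
          (Comma.snd g1 f2 ⋙ g2).lan : (A ⥤ V) ⥤ (E ⥤ V)) ≅
        (Functor.whiskeringLeft S1 A V).obj f1 ⋙ g1.lan ⋙
          (Functor.whiskeringLeft S2 C V).obj f2 ⋙ g2.lan) := by
  have hbc := isIso_commaBaseChange g1 f2 V
  refine ⟨⟨assocFwd g1 f2 g2 f3, assocBwd g1 f2 g2 f3, rfl, rfl⟩, hbc, ⟨?_⟩⟩
  -- `(snd ⋙ g2)_! ≅ snd_! ⋙ g2_!` by uniqueness of left adjoints
  let adjC : (Comma.snd g1 f2).lan ⋙ g2.lan ⊣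
      (Functor.whiskeringLeft (Comma g1 f2) E V).obj (Comma.snd g1 f2 ⋙ g2) :=
    ((Comma.snd g1 f2).lanAdjunction V).comp (g2.lanAdjunction V)
  let lanIso : (Comma.snd g1 f2 ⋙ g2).lan ≅ (Comma.snd g1 f2).lan ⋙ g2.lan :=
    ((Comma.snd g1 f2 ⋙ g2).lanAdjunction V).leftAdjointUniq adjC
  exact Functor.isoWhiskerLeft _ lanIso ≪≫
    Functor.isoWhiskerLeft ((Functor.whiskeringLeft S1 A V).obj f1)
      (Functor.isoWhiskerRight
        (asIso (baseChange V (Comma.fst g1 f2) (Comma.snd g1 f2) g1 f2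
          (Comma.natTrans g1 f2))) g2.lan)
end
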